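/- arXiv:1110.1912 — 2 statements merged into one kernel-verified Lean document; each statement's English description precedes it below -/
import Mathlib

section
/- For any finite simple graph H with k edges and any two graphons f, g, the homomorphism densities satisfy |t(H,f) - t(H,g)| ≤ k·δ_□(f,g), where δ_□ is the cut distance. -/
open MeasureTheory

/-- Homomorphism density `t(H,h)` for a graph on `Fin ℓ` with edge finset `E`. -/
noncomputable def homDensity (ℓ : ℕ) (E : Finset (Fin ℓ × Fin ℓ)) (h : ℝ → ℝ → ℝ) : ℝ :=
  ∫ x : Fin ℓ → ℝ, ∏ e ∈ E, h (x e.1) (x e.2)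
    ∂(Measure.pi fun _ => volume.restrict (Set.Icc 0 1))

/-- The cut norm distance `d_□(f,g) = sup_{S,T ⊆ [0,1]} |∫_{S×T} (f-g)|`. -/
noncomputable def cutDist (f g : ℝ → ℝ → ℝ) : ℝ :=
  ⨆ S : {S : Set ℝ // MeasurableSet S}, ⨆ T : {T : Set ℝ // MeasurableSet T},
    |∫ x in S.1 ∩ Set.Icc 0 1, ∫ y in T.1 ∩ Set.Icc 0 1, (f x y - g x y)|

/-- A measure-preserving bijection of `[0,1]`. -/
structure MPBij where
  toFun : ℝ → ℝ
  bijOn : Set.BijOn toFun (Set.Icc 0 1) (Set.Icc 0 1)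
  measPres : MeasurePreserving toFun (volume.restrict (Set.Icc 0 1))
      (volume.restrict (Set.Icc 0 1))

/-- The cut distance `δ_□` between (representatives of) graphons. -/
noncomputable def cutDistDelta (f g : ℝ → ℝ → ℝ) : ℝ :=
  ⨅ σ₁ : MPBij, ⨅ σ₂ : MPBij,
    cutDist (fun x y => f (σ₁.toFun x) (σ₁.toFun y)) (fun x y => g (σ₂.toFun x) (σ₂.toFun y))


section Aux
open Set Function

set_option linter.unusedSectionVars false
set_option maxHeartbeats 1000000

noncomputable def mu01 : Measure ℝ := volume.restrict (Set.Icc 0 1)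

instance : IsProbabilityMeasure mu01 :=
  ⟨by simp [mu01, Real.volume_Icc]⟩

lemma measurePreserving_update_pi {ℓ : ℕ} (μ : Measure ℝ) [IsProbabilityMeasure μ] (i : Fin ℓ) :
    MeasurePreserving (fun p : (Fin ℓ → ℝ) × ℝ => Function.update p.1 i p.2)
      ((Measure.pi fun _ : Fin ℓ => μ).prod μ) (Measure.pi fun _ : Fin ℓ => μ) := by
  refine ⟨measurable_update', ?_⟩
  refine (Measure.pi_eq fun B hB => ?_).symm
  rw [Measure.map_apply measurable_update' (MeasurableSet.univ_pi hB)]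
  have hpre : (fun p : (Fin ℓ → ℝ) × ℝ => Function.update p.1 i p.2) ⁻¹' (Set.pi Set.univ B)
      = (Set.pi Set.univ (Function.update B i Set.univ)) ×ˢ (B i) := by
    ext ⟨x, s⟩
    simp only [Set.mem_preimage, Set.mem_pi, Set.mem_univ, forall_true_left, Set.mem_prod]
    constructor
    · intro h
      refine ⟨fun m => ?_, by simpa using h i⟩
      rcases eq_or_ne m i with rfl | hm
      · simp
      · simpa [Function.update_of_ne hm] using h m
    · rintro ⟨h1, h2⟩ m
      rcases eq_or_ne m i with rfl | hm
      · simpa using h2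
      · have := h1 m
        simpa [Function.update_of_ne hm] using this
  rw [hpre, Measure.prod_prod, Measure.pi_pi]
  have : ∀ m, μ (Function.update B i Set.univ m)
      = Function.update (fun m => μ (B m)) i (μ Set.univ) m := fun m =>
    (Function.apply_update (fun _ b => μ b) B i Set.univ m)
  simp_rw [this]
  rw [Finset.prod_update_of_mem (Finset.mem_univ i), measure_univ, one_mul,
    ← Finset.mul_prod_erase Finset.univ _ (Finset.mem_univ i), mul_comm, Finset.sdiff_singleton_eq_erase]

lemma meas_pair {ℓ : ℕ} {h : ℝ → ℝ → ℝ} (hm : Measurable (Function.uncurry h)) (i j : Fin ℓ) :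
    Measurable fun x : Fin ℓ → ℝ => h (x i) (x j) := by
  have he : (fun x : Fin ℓ → ℝ => h (x i) (x j))
      = Function.uncurry h ∘ fun x => (x i, x j) := rfl
  rw [he]
  exact hm.comp ((measurable_pi_apply i).prodMk (measurable_pi_apply j))

lemma integrable_of_bdd {α : Type*} [MeasurableSpace α] {μ : Measure α} [IsFiniteMeasure μ]
    {h : α → ℝ} (hm : AEStronglyMeasurable h μ) (hb : ∀ x, |h x| ≤ 1) : Integrable h μ :=
  (integrable_const (1:ℝ)).mono' hm (ae_of_all _ fun x => by simpa using hb x)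




lemma int_up {μ : Measure ℝ} [IsFiniteMeasure μ] {c K : ℝ → ℝ}
    (hc : Measurable c) (hK : Measurable K)
    (hcr : ∀ x, c x ∈ Set.Icc (0:ℝ) 1) (hKb : ∀ x, |K x| ≤ 1) :
    ∫ x, c x * K x ∂μ ≤ ∫ x in {x | 0 ≤ K x}, K x ∂μ := by
  have hSet : MeasurableSet {x | 0 ≤ K x} := measurableSet_le measurable_const hK
  rw [← integral_indicator hSet]
  refine integral_mono ?_ ?_ ?_
  · exact integrable_of_bdd (hc.mul hK).aestronglyMeasurable
      (fun x => by
        rw [abs_mul]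
        have h1 := (hcr x).1; have h2 := (hcr x).2
        calc |c x| * |K x| ≤ 1 * 1 := by
              refine mul_le_mul ?_ (hKb x) (abs_nonneg _) zero_le_one
              rw [abs_of_nonneg h1]; exact h2
          _ = 1 := one_mul 1)
  · refine integrable_of_bdd ((hK.indicator hSet).aestronglyMeasurable) (fun x => ?_)
    calc |Set.indicator {x | 0 ≤ K x} K x| ≤ |K x| := by
          by_cases h : x ∈ {x | 0 ≤ K x}
          · rw [Set.indicator_of_mem h]
          · rw [Set.indicator_of_notMem h]; simp [abs_nonneg]
      _ ≤ 1 := hKb x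
  · intro x
    rcases le_or_gt 0 (K x) with h | h
    · rw [Set.indicator_of_mem (show x ∈ {x | 0 ≤ K x} from h)]
      exact mul_le_of_le_one_left h (hcr x).2
    · rw [Set.indicator_of_notMem (by simpa using not_le.mpr h)]
      exact mul_nonpos_of_nonneg_of_nonpos (hcr x).1 h.le

lemma int_down {μ : Measure ℝ} [IsFiniteMeasure μ] {c K : ℝ → ℝ}
    (hc : Measurable c) (hK : Measurable K)
    (hcr : ∀ x, c x ∈ Set.Icc (0:ℝ) 1) (hKb : ∀ x, |K x| ≤ 1) :
    ∫ x in {x | K x < 0}, K x ∂μ ≤ ∫ x, c x * K x ∂μ := by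
  have hSet : MeasurableSet {x | K x < 0} := measurableSet_lt hK measurable_const
  rw [← integral_indicator hSet]
  refine integral_mono ?_ ?_ ?_
  · refine integrable_of_bdd ((hK.indicator hSet).aestronglyMeasurable) (fun x => ?_)
    calc |Set.indicator {x | K x < 0} K x| ≤ |K x| := by
          by_cases h : x ∈ {x | K x < 0}
          · rw [Set.indicator_of_mem h]
          · rw [Set.indicator_of_notMem h]; simp [abs_nonneg]
      _ ≤ 1 := hKb x
  · exact integrable_of_bdd (hc.mul hK).aestronglyMeasurable
      (fun x => by
        rw [abs_mul]
        have h1 := (hcr x).1; have h2 := (hcr x).2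
        calc |c x| * |K x| ≤ 1 * 1 := by
              refine mul_le_mul ?_ (hKb x) (abs_nonneg _) zero_le_one
              rw [abs_of_nonneg h1]; exact h2
          _ = 1 := one_mul 1)
  · intro x
    rcases lt_or_ge (K x) 0 with h | h
    · rw [Set.indicator_of_mem (show x ∈ {x | K x < 0} from h)]
      have h1 := (hcr x).1; have h2 := (hcr x).2
      show K x ≤ c x * K x
      nlinarith
    · rw [Set.indicator_of_notMem (by simpa using not_lt.mpr h)]
      exact mul_nonneg (hcr x).1 h

section core
variable {f g : ℝ → ℝ → ℝ}
  (hfm : Measurable (Function.uncurry f)) (hgm : Measurable (Function.uncurry g))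
  (hfr : ∀ x y, f x y ∈ Set.Icc (0 : ℝ) 1) (hgr : ∀ x y, g x y ∈ Set.Icc (0 : ℝ) 1)

lemma Fm_left (hfm : Measurable (Function.uncurry f)) (x : ℝ) : Measurable (fun y => f x y) :=
  hfm.comp (measurable_const.prodMk measurable_id)

lemma Fm_right (hfm : Measurable (Function.uncurry f)) (y : ℝ) : Measurable (fun x => f x y) :=
  hfm.comp (measurable_id.prodMk measurable_const)

include hfr hgr in
lemma Fabs (x y : ℝ) : |f x y - g x y| ≤ 1 := by
  have h1 := hfr x y; have h2 := hgr x y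
  simp only [Set.mem_Icc] at h1 h2
  rw [abs_le]; constructor <;> linarith

include hfm hgm hfr hgr in
lemma term_le_one (S T : Set ℝ) :
    |∫ x in S ∩ Set.Icc 0 1, ∫ y in T ∩ Set.Icc 0 1, (f x y - g x y)| ≤ 1 := by
  have key : ∀ (A : Set ℝ) (h : ℝ → ℝ), (∀ x, |h x| ≤ 1) → A ⊆ Set.Icc 0 1 →
      |∫ x in A, h x| ≤ 1 := by
    intro A h hb hA
    haveI : IsFiniteMeasure (volume.restrict A) := ⟨by
      rw [Measure.restrict_apply_univ]
      exact lt_of_le_of_lt (measure_mono hA)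
        (by rw [Real.volume_Icc]; exact ENNReal.ofReal_lt_top)⟩
    have h1 : ‖∫ x in A, h x‖ ≤ 1 * (volume.restrict A Set.univ).toReal := by
      apply norm_integral_le_of_norm_le_const
      exact ae_of_all _ fun x => by simpa using hb x
    have h2 : (volume.restrict A Set.univ).toReal ≤ 1 := by
      rw [Measure.restrict_apply_univ]
      have : volume A ≤ volume (Set.Icc (0:ℝ) 1) := measure_mono hA
      rw [Real.volume_Icc] at this
      calc (volume A).toReal ≤ (ENNReal.ofReal (1 - 0)).toReal :=
            ENNReal.toReal_mono (by simp) this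
        _ = 1 := by simp
    calc |∫ x in A, h x| ≤ 1 * (volume.restrict A Set.univ).toReal := h1
      _ ≤ 1 := by linarith
  refine key _ _ (fun x => ?_) Set.inter_subset_right
  exact key _ _ (fun y => Fabs hfr hgr x y) Set.inter_subset_right

include hfm hgm hfr hgr in
lemma setIntegral_le_cutDist {S T : Set ℝ} (hS : MeasurableSet S) (hT : MeasurableSet T) :
    |∫ x in S ∩ Set.Icc 0 1, ∫ y in T ∩ Set.Icc 0 1, (f x y - g x y)| ≤ cutDist f g := by
  have bddT : ∀ S' : {S : Set ℝ // MeasurableSet S}, BddAbove (Set.range fun T' :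
      {T : Set ℝ // MeasurableSet T} =>
      |∫ x in S'.1 ∩ Set.Icc 0 1, ∫ y in T'.1 ∩ Set.Icc 0 1, (f x y - g x y)|) := by
    intro S'
    exact ⟨1, by rintro _ ⟨T', rfl⟩; exact term_le_one hfm hgm hfr hgr _ _⟩
  have bddS : BddAbove (Set.range fun S' : {S : Set ℝ // MeasurableSet S} =>
      ⨆ T' : {T : Set ℝ // MeasurableSet T},
      |∫ x in S'.1 ∩ Set.Icc 0 1, ∫ y in T'.1 ∩ Set.Icc 0 1, (f x y - g x y)|) := by
    refine ⟨1, ?_⟩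
    rintro _ ⟨S', rfl⟩
    exact ciSup_le fun T' => term_le_one hfm hgm hfr hgr _ _
  calc |∫ x in S ∩ Set.Icc 0 1, ∫ y in T ∩ Set.Icc 0 1, (f x y - g x y)|
      ≤ ⨆ T' : {T : Set ℝ // MeasurableSet T},
        |∫ x in S ∩ Set.Icc 0 1, ∫ y in T'.1 ∩ Set.Icc 0 1, (f x y - g x y)| :=
        le_ciSup (bddT ⟨S, hS⟩) ⟨T, hT⟩
    _ ≤ cutDist f g := le_ciSup bddS ⟨S, hS⟩

include hfm hgm hfr hgr in
lemma cutDist_nonneg : 0 ≤ cutDist f g := by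
  have := setIntegral_le_cutDist hfm hgm hfr hgr (S := ∅) (T := ∅)
    MeasurableSet.empty MeasurableSet.empty
  simpa using this


lemma abs_mul_le_one {u v : ℝ} (hu : |u| ≤ 1) (hv : |v| ≤ 1) : |u * v| ≤ 1 := by
  rw [abs_mul]
  calc |u| * |v| ≤ 1 * 1 := mul_le_mul hu hv (abs_nonneg _) zero_le_one
    _ = 1 := one_mul 1

lemma abs_of_Icc {u : ℝ} (hu : u ∈ Set.Icc (0:ℝ) 1) : |u| ≤ 1 := by
  rw [abs_of_nonneg hu.1]; exact hu.2

include hfm hgm hfr hgr in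
lemma weighted_aux (a b : ℝ → ℝ) (ham : Measurable a) (hbm : Measurable b)
    (har : ∀ x, a x ∈ Set.Icc (0:ℝ) 1) (hbr : ∀ y, b y ∈ Set.Icc (0:ℝ) 1) :
    (∫ x, ∫ y, (f x y - g x y) * a x * b y ∂mu01 ∂mu01) ≤ cutDist f g := by
  have hFm : Measurable fun p : ℝ × ℝ => f p.1 p.2 - g p.1 p.2 := hfm.sub hgm
  have hFb : ∀ x y, |f x y - g x y| ≤ 1 := Fabs hfr hgr
  have hmulb : ∀ x y, |(f x y - g x y) * b y| ≤ 1 := fun x y =>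
    abs_mul_le_one (hFb x y) (abs_of_Icc (hbr y))
  set K : ℝ → ℝ := fun x => ∫ y, (f x y - g x y) * b y ∂mu01 with hKdef
  have hKm : Measurable K := by
    have hsm : StronglyMeasurable fun p : ℝ × ℝ => (f p.1 p.2 - g p.1 p.2) * b p.2 :=
      (hFm.mul (hbm.comp measurable_snd)).stronglyMeasurable
    exact hsm.integral_prod_right'.measurable
  have hKb : ∀ x, |K x| ≤ 1 := fun x => by
    have h : ‖∫ y, (f x y - g x y) * b y ∂mu01‖ ≤ 1 * (mu01 Set.univ).toReal :=
      norm_integral_le_of_norm_le_const (ae_of_all _ fun y => by rw [Real.norm_eq_abs]; exact hmulb x y)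
    simpa using h
  have step1 : (∫ x, ∫ y, (f x y - g x y) * a x * b y ∂mu01 ∂mu01)
      = ∫ x, a x * K x ∂mu01 := by
    have h : ∀ x y, (f x y - g x y) * a x * b y = a x * ((f x y - g x y) * b y) := by
      intros; ring
    simp_rw [h, integral_const_mul]
    rfl
  set S := {x | 0 ≤ K x} with hSdef
  have hS : MeasurableSet S := measurableSet_le measurable_const hKm
  have step2 : ∫ x, a x * K x ∂mu01 ≤ ∫ x in S, K x ∂mu01 := int_up ham hKm har hKb
  have hint : Integrable (fun p : ℝ × ℝ => (f p.1 p.2 - g p.1 p.2) * b p.2)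
      ((mu01.restrict S).prod mu01) :=
    integrable_of_bdd (hFm.mul (hbm.comp measurable_snd)).aestronglyMeasurable
      (fun p => hmulb p.1 p.2)
  have step3 : ∫ x in S, K x ∂mu01
      = ∫ y, (∫ x in S, (f x y - g x y) ∂mu01) * b y ∂mu01 := by
    rw [show (∫ x in S, K x ∂mu01)
        = ∫ x in S, ∫ y, (f x y - g x y) * b y ∂mu01 ∂mu01 from rfl,
      integral_integral_swap hint]
    simp_rw [integral_mul_const]
  set L : ℝ → ℝ := fun y => ∫ x in S, (f x y - g x y) ∂mu01 with hLdef
  have hLm : Measurable L :=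
    (hFm.stronglyMeasurable.integral_prod_left').measurable
  have hLb : ∀ y, |L y| ≤ 1 := fun y => by
    have h : ‖∫ x in S, (f x y - g x y) ∂mu01‖ ≤ 1 * ((mu01.restrict S) Set.univ).toReal :=
      norm_integral_le_of_norm_le_const (ae_of_all _ fun x => by rw [Real.norm_eq_abs]; exact hFb x y)
    have h2 : ((mu01.restrict S) Set.univ).toReal ≤ 1 := by
      rw [Measure.restrict_apply_univ]
      have hle : mu01 S ≤ mu01 Set.univ := measure_mono (Set.subset_univ S)
      have := ENNReal.toReal_mono (by simp) hle
      simpa using this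
    calc |L y| ≤ 1 * ((mu01.restrict S) Set.univ).toReal := h
      _ ≤ 1 := by linarith
  have step4 : ∫ y, (∫ x in S, (f x y - g x y) ∂mu01) * b y ∂mu01
      ≤ ∫ y in {y | 0 ≤ L y}, L y ∂mu01 := by
    have h : ∀ y, (∫ x in S, (f x y - g x y) ∂mu01) * b y = b y * L y := fun y =>
      mul_comm _ _
    simp_rw [h]
    exact int_up hbm hLm hbr hLb
  set T := {y | 0 ≤ L y} with hTdef
  have hT : MeasurableSet T := measurableSet_le measurable_const hLm
  have hint2 : Integrable (fun p : ℝ × ℝ => f p.1 p.2 - g p.1 p.2)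
      ((mu01.restrict S).prod (mu01.restrict T)) :=
    integrable_of_bdd hFm.aestronglyMeasurable (fun p => hFb p.1 p.2)
  have step5 : ∫ y in T, L y ∂mu01
      = ∫ x in S, ∫ y in T, (f x y - g x y) ∂mu01 ∂mu01 :=
    (integral_integral_swap hint2).symm
  have hformS : mu01.restrict S = volume.restrict (S ∩ Set.Icc 0 1) := by
    rw [mu01, Measure.restrict_restrict hS]
  have hformT : mu01.restrict T = volume.restrict (T ∩ Set.Icc 0 1) := by
    rw [mu01, Measure.restrict_restrict hT]
  have step6 : ∫ x in S, ∫ y in T, (f x y - g x y) ∂mu01 ∂mu01 ≤ cutDist f g := by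
    rw [hformS, hformT]
    exact le_trans (le_abs_self _) (setIntegral_le_cutDist hfm hgm hfr hgr hS hT)
  calc (∫ x, ∫ y, (f x y - g x y) * a x * b y ∂mu01 ∂mu01)
      = ∫ x, a x * K x ∂mu01 := step1
    _ ≤ ∫ x in S, K x ∂mu01 := step2
    _ = ∫ y, (∫ x in S, (f x y - g x y) ∂mu01) * b y ∂mu01 := step3
    _ ≤ ∫ y in T, L y ∂mu01 := step4
    _ = ∫ x in S, ∫ y in T, (f x y - g x y) ∂mu01 ∂mu01 := step5
    _ ≤ cutDist f g := step6


lemma cutDist_comm (f g : ℝ → ℝ → ℝ) : cutDist g f = cutDist f g := by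
  unfold cutDist
  refine iSup_congr fun S => iSup_congr fun T => ?_
  have h : ∀ x, (∫ y in T.1 ∩ Set.Icc 0 1, (g x y - f x y))
      = -∫ y in T.1 ∩ Set.Icc 0 1, (f x y - g x y) := fun x => by
    rw [← integral_neg]; simp only [neg_sub]
  simp_rw [h, integral_neg, abs_neg]

include hfm hgm hfr hgr in
lemma weighted_le_cutDist (a b : ℝ → ℝ) (ham : Measurable a) (hbm : Measurable b)
    (har : ∀ x, a x ∈ Set.Icc (0:ℝ) 1) (hbr : ∀ y, b y ∈ Set.Icc (0:ℝ) 1) :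
    |∫ x, ∫ y, (f x y - g x y) * a x * b y ∂mu01 ∂mu01| ≤ cutDist f g := by
  rw [abs_le]
  refine ⟨?_, weighted_aux hfm hgm hfr hgr a b ham hbm har hbr⟩
  have h := weighted_aux hgm hfm hgr hfr a b ham hbm har hbr
  have hneg : (∫ x, ∫ y, (g x y - f x y) * a x * b y ∂mu01 ∂mu01)
      = -∫ x, ∫ y, (f x y - g x y) * a x * b y ∂mu01 ∂mu01 := by
    have hpt : ∀ x y, (g x y - f x y) * a x * b y
        = -((f x y - g x y) * a x * b y) := by intros; ring
    simp_rw [hpt, integral_neg]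
  rw [hneg, cutDist_comm] at h
  linarith

section swap

variable {ℓ : ℕ} {E : Finset (Fin ℓ × Fin ℓ)}
    (hloop : ∀ e ∈ E, e.1 ≠ e.2) (hsimple : ∀ e ∈ E, (e.2, e.1) ∉ E)

noncomputable def nu (ℓ : ℕ) : Measure (Fin ℓ → ℝ) := Measure.pi fun _ => mu01

instance (ℓ : ℕ) : IsProbabilityMeasure (nu ℓ) := by
  unfold nu; infer_instance

include hloop hsimple hfm hgm hfr hgr in
lemma swap_bound (h₁ h₂ : (Fin ℓ × Fin ℓ) → ℝ → ℝ → ℝ) (e₀ : Fin ℓ × Fin ℓ) (he₀ : e₀ ∈ E)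
    (hm2 : ∀ e ∈ E, Measurable (Function.uncurry (h₂ e)))
    (hr2 : ∀ e ∈ E, ∀ x y, h₂ e x y ∈ Set.Icc (0:ℝ) 1)
    (h1e : h₁ e₀ = f) (h2e : h₂ e₀ = g)
    (hagree : ∀ e ∈ E, e ≠ e₀ → h₁ e = h₂ e) :
    |(∫ x, ∏ e ∈ E, h₁ e (x e.1) (x e.2) ∂(nu ℓ))
      - ∫ x, ∏ e ∈ E, h₂ e (x e.1) (x e.2) ∂(nu ℓ)| ≤ cutDist f g := by
  classical
  set i := e₀.1 with hi
  set j := e₀.2 with hj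
  have hij : i ≠ j := hloop e₀ he₀
  set E' := E.erase e₀ with hE'
  set W : (Fin ℓ → ℝ) → ℝ := fun x => ∏ e ∈ E', h₂ e (x e.1) (x e.2) with hW
  -- measurability of each factor
  have hfac : ∀ e ∈ E, Measurable fun x : Fin ℓ → ℝ => h₂ e (x e.1) (x e.2) := fun e he =>
    meas_pair (hm2 e he) e.1 e.2
  have hWm : Measurable W :=
    Finset.measurable_prod E' fun e he => hfac e (Finset.mem_of_mem_erase he)
  have hWr : ∀ x, W x ∈ Set.Icc (0:ℝ) 1 := fun x =>
    ⟨Finset.prod_nonneg fun e he => (hr2 e (Finset.mem_of_mem_erase he) _ _).1,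
     Finset.prod_le_one (fun e he => (hr2 e (Finset.mem_of_mem_erase he) _ _).1)
       (fun e he => (hr2 e (Finset.mem_of_mem_erase he) _ _).2)⟩
  set Φ : (Fin ℓ → ℝ) → ℝ := fun x => (f (x i) (x j) - g (x i) (x j)) * W x with hΦ
  have hΦm : Measurable Φ :=
    ((meas_pair hfm i j).sub (meas_pair hgm i j)).mul hWm
  have hΦb : ∀ x, |Φ x| ≤ 1 := fun x =>
    abs_mul_le_one (Fabs hfr hgr _ _) (abs_of_Icc (hWr x))
  -- difference of the two integrals equals ∫ Φ
  have hdiff : (∫ x, ∏ e ∈ E, h₁ e (x e.1) (x e.2) ∂(nu ℓ))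
      - (∫ x, ∏ e ∈ E, h₂ e (x e.1) (x e.2) ∂(nu ℓ)) = ∫ x, Φ x ∂(nu ℓ) := by
    have hprod1 : ∀ x : Fin ℓ → ℝ, (∏ e ∈ E, h₁ e (x e.1) (x e.2))
        = f (x i) (x j) * W x := by
      intro x
      rw [← Finset.mul_prod_erase E _ he₀, h1e]
      congr 1
      exact Finset.prod_congr rfl fun e he => by
        rw [hagree e (Finset.mem_of_mem_erase he) (Finset.ne_of_mem_erase he)]
    have hprod2 : ∀ x : Fin ℓ → ℝ, (∏ e ∈ E, h₂ e (x e.1) (x e.2))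
        = g (x i) (x j) * W x := by
      intro x
      rw [← Finset.mul_prod_erase E _ he₀, h2e]
    simp_rw [hprod1, hprod2]
    rw [← integral_sub]
    · congr 1; funext x
      show f (x i) (x j) * W x - g (x i) (x j) * W x = (f (x i) (x j) - g (x i) (x j)) * W x
      ring
    · exact integrable_of_bdd
        (((meas_pair hfm i j).mul hWm).aestronglyMeasurable)
        (fun x => abs_mul_le_one (abs_of_Icc (hfr _ _)) (abs_of_Icc (hWr x)))
    · exact integrable_of_bdd
        (((meas_pair hgm i j).mul hWm).aestronglyMeasurable)
        (fun x => abs_mul_le_one (abs_of_Icc (hgr _ _)) (abs_of_Icc (hWr x)))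
  -- measure preserving double update
  have MP : MeasurePreserving
      (fun q : ((Fin ℓ → ℝ) × ℝ) × ℝ => Function.update (Function.update q.1.1 i q.1.2) j q.2)
      (((nu ℓ).prod mu01).prod mu01) (nu ℓ) := by
    have m1 := measurePreserving_update_pi (ℓ := ℓ) mu01 i
    have m2 := measurePreserving_update_pi (ℓ := ℓ) mu01 j
    exact m2.comp (m1.prod (MeasurePreserving.id mu01))
  -- rewrite the integral as a triple integral
  have key : ∫ x, Φ x ∂(nu ℓ)
      = ∫ x, ∫ s, ∫ t, Φ (Function.update (Function.update x i s) j t) ∂mu01 ∂mu01 ∂(nu ℓ) := by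
    have e1 : ∫ x, Φ x ∂(nu ℓ)
        = ∫ q, Φ (Function.update (Function.update q.1.1 i q.1.2) j q.2)
            ∂(((nu ℓ).prod mu01).prod mu01) := by
      rw [← MP.map_eq, integral_map MP.measurable.aemeasurable]
      rw [MP.map_eq]
      exact hΦm.aestronglyMeasurable
    have hcomp : Measurable fun q : ((Fin ℓ → ℝ) × ℝ) × ℝ =>
        Φ (Function.update (Function.update q.1.1 i q.1.2) j q.2) := hΦm.comp MP.measurable
    have e2 : ∫ q, Φ (Function.update (Function.update q.1.1 i q.1.2) j q.2)
          ∂(((nu ℓ).prod mu01).prod mu01)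
        = ∫ p, ∫ t, Φ (Function.update (Function.update p.1 i p.2) j t) ∂mu01
            ∂((nu ℓ).prod mu01) :=
      integral_prod _ (integrable_of_bdd hcomp.aestronglyMeasurable fun q => hΦb _)
    have hG : StronglyMeasurable fun p : (Fin ℓ → ℝ) × ℝ =>
        ∫ t, Φ (Function.update (Function.update p.1 i p.2) j t) ∂mu01 :=
      hcomp.stronglyMeasurable.integral_prod_right'
    have hGb : ∀ p : (Fin ℓ → ℝ) × ℝ,
        |∫ t, Φ (Function.update (Function.update p.1 i p.2) j t) ∂mu01| ≤ 1 := fun p => by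
      have h : ‖∫ t, Φ (Function.update (Function.update p.1 i p.2) j t) ∂mu01‖
          ≤ 1 * (mu01 Set.univ).toReal :=
        norm_integral_le_of_norm_le_const (ae_of_all _ fun t => by
          rw [Real.norm_eq_abs]; exact hΦb _)
      simpa using h
    have e3 : ∫ p, ∫ t, Φ (Function.update (Function.update p.1 i p.2) j t) ∂mu01
          ∂((nu ℓ).prod mu01)
        = ∫ x, ∫ s, ∫ t, Φ (Function.update (Function.update x i s) j t) ∂mu01 ∂mu01
            ∂(nu ℓ) :=
      integral_prod _ (integrable_of_bdd hG.aestronglyMeasurable hGb)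
    rw [e1, e2, e3]
  -- the inner double integral is a weighted cut-norm expression
  have inner_bound : ∀ x : Fin ℓ → ℝ,
      |∫ s, ∫ t, Φ (Function.update (Function.update x i s) j t) ∂mu01 ∂mu01|
        ≤ cutDist f g := by
    intro x
    set P : Fin ℓ × Fin ℓ → Prop := fun e => e.1 = i ∨ e.2 = i with hP
    set a : ℝ → ℝ := fun s => ∏ e ∈ E'.filter P,
      h₂ e (Function.update x i s e.1) (Function.update x i s e.2) with ha
    set b : ℝ → ℝ := fun t => ∏ e ∈ E'.filter (fun e => ¬ P e),
      h₂ e (Function.update x j t e.1) (Function.update x j t e.2) with hb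
    have hu : ∀ (m : Fin ℓ) (z : Fin ℓ) , Measurable fun s : ℝ => Function.update x z s m := by
      intro m z
      rcases eq_or_ne m z with rfl | hmz
      · simpa [Function.update_self] using measurable_id'
      · simpa [Function.update_of_ne hmz] using measurable_const
    have ham : Measurable a := Finset.measurable_prod _ fun e he =>
      by
        have := hm2 e (Finset.mem_of_mem_erase (Finset.mem_of_mem_filter e he))
        have he2 : (fun s : ℝ => h₂ e (Function.update x i s e.1) (Function.update x i s e.2))
            = Function.uncurry (h₂ e) ∘ fun s =>
              (Function.update x i s e.1, Function.update x i s e.2) := rfl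
        rw [he2]
        exact this.comp ((hu e.1 i).prodMk (hu e.2 i))
    have hbm : Measurable b := Finset.measurable_prod _ fun e he =>
      by
        have := hm2 e (Finset.mem_of_mem_erase (Finset.mem_of_mem_filter e he))
        have he2 : (fun t : ℝ => h₂ e (Function.update x j t e.1) (Function.update x j t e.2))
            = Function.uncurry (h₂ e) ∘ fun t =>
              (Function.update x j t e.1, Function.update x j t e.2) := rfl
        rw [he2]
        exact this.comp ((hu e.1 j).prodMk (hu e.2 j))
    have har : ∀ s, a s ∈ Set.Icc (0:ℝ) 1 := fun s =>
      ⟨Finset.prod_nonneg fun e he =>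
        (hr2 e (Finset.mem_of_mem_erase (Finset.mem_of_mem_filter e he)) _ _).1,
       Finset.prod_le_one
         (fun e he => (hr2 e (Finset.mem_of_mem_erase (Finset.mem_of_mem_filter e he)) _ _).1)
         (fun e he => (hr2 e (Finset.mem_of_mem_erase (Finset.mem_of_mem_filter e he)) _ _).2)⟩
    have hbr : ∀ t, b t ∈ Set.Icc (0:ℝ) 1 := fun t =>
      ⟨Finset.prod_nonneg fun e he =>
        (hr2 e (Finset.mem_of_mem_erase (Finset.mem_of_mem_filter e he)) _ _).1,
       Finset.prod_le_one
         (fun e he => (hr2 e (Finset.mem_of_mem_erase (Finset.mem_of_mem_filter e he)) _ _).1)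
         (fun e he => (hr2 e (Finset.mem_of_mem_erase (Finset.mem_of_mem_filter e he)) _ _).2)⟩
    have hpoint : ∀ s t : ℝ, Φ (Function.update (Function.update x i s) j t)
        = (f s t - g s t) * a s * b t := by
      intro s t
      set Y := Function.update (Function.update x i s) j t with hY
      have hYi : Y i = s := by
        rw [hY, Function.update_of_ne hij, Function.update_self]
      have hYj : Y j = t := by rw [hY, Function.update_self]
      have hfactor : W Y = a s * b t := by
        show (∏ e ∈ E', h₂ e (Y e.1) (Y e.2)) = a s * b t
        rw [← Finset.prod_filter_mul_prod_filter_not E' P]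
        congr 1
        · refine Finset.prod_congr rfl fun e he => ?_
          have heE' := Finset.mem_of_mem_filter e he
          have heE := Finset.mem_of_mem_erase heE'
          have hne := Finset.ne_of_mem_erase heE'
          have hPe : P e := (Finset.mem_filter.mp he).2
          have h1 : e.1 ≠ j ∧ e.2 ≠ j := by
            constructor
            · intro hc
              rcases hPe with h | h
              · exact hij (h.symm.trans hc)
              · refine hsimple e heE ?_
                have he2 : (e.2, e.1) = e₀ := Prod.ext (h.trans hi) (hc.trans hj)
                rw [he2]; exact he₀
            · intro hc
              rcases hPe with h | h
              · exact hne (Prod.ext (h.trans hi) (hc.trans hj))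
              · exact hij (h.symm.trans hc)
          have hv1 : Y e.1 = Function.update x i s e.1 := by
            rw [hY, Function.update_of_ne h1.1]
          have hv2 : Y e.2 = Function.update x i s e.2 := by
            rw [hY, Function.update_of_ne h1.2]
          rw [hv1, hv2]
        · refine Finset.prod_congr rfl fun e he => ?_
          have hPe : ¬ P e := (Finset.mem_filter.mp he).2
          simp only [hP, not_or] at hPe
          have hv1 : Y e.1 = Function.update x j t e.1 := by
            simp [hY, Function.update_apply, hPe.1]
          have hv2 : Y e.2 = Function.update x j t e.2 := by
            simp [hY, Function.update_apply, hPe.2]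
          rw [hv1, hv2]
      show (f (Y i) (Y j) - g (Y i) (Y j)) * W Y = (f s t - g s t) * a s * b t
      simp only [hYi, hYj, hfactor]
      ring
    simp_rw [hpoint]
    exact weighted_le_cutDist hfm hgm hfr hgr a b ham hbm har hbr
  -- conclude
  rw [hdiff, key]
  have hnorm : ‖∫ x, ∫ s, ∫ t, Φ (Function.update (Function.update x i s) j t)
      ∂mu01 ∂mu01 ∂(nu ℓ)‖
      ≤ ∫ x, ‖∫ s, ∫ t, Φ (Function.update (Function.update x i s) j t) ∂mu01 ∂mu01‖
        ∂(nu ℓ) := norm_integral_le_integral_norm _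
  have hmono : (∫ x, ‖∫ s, ∫ t, Φ (Function.update (Function.update x i s) j t) ∂mu01 ∂mu01‖
        ∂(nu ℓ)) ≤ ∫ _x, cutDist f g ∂(nu ℓ) := by
    refine integral_mono_of_nonneg (ae_of_all _ fun x => norm_nonneg _)
      (integrable_const _) (ae_of_all _ fun x => ?_)
    show ‖∫ s, ∫ t, Φ (Function.update (Function.update x i s) j t) ∂mu01 ∂mu01‖
      ≤ cutDist f g
    rw [Real.norm_eq_abs]
    exact inner_bound x
  rw [Real.norm_eq_abs] at hnorm
  have : (∫ _x, cutDist f g ∂(nu ℓ)) = cutDist f g := by simp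
  linarith


include hfm hgm hfr hgr hloop hsimple in
lemma counting :
    |(∫ x, ∏ e ∈ E, f (x e.1) (x e.2) ∂(nu ℓ)) - ∫ x, ∏ e ∈ E, g (x e.1) (x e.2) ∂(nu ℓ)|
      ≤ E.card * cutDist f g := by
  classical
  set L := E.toList with hL
  have hnd : L.Nodup := E.nodup_toList
  have hlen : L.length = E.card := E.length_toList
  set H : ℕ → (Fin ℓ × Fin ℓ) → ℝ → ℝ → ℝ :=
    fun m e => if e ∈ L.take m then f else g with hHdef
  set T : ℕ → ℝ := fun m => ∫ x, ∏ e ∈ E, H m e (x e.1) (x e.2) ∂(nu ℓ) with hTdef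
  have hT0 : T 0 = ∫ x, ∏ e ∈ E, g (x e.1) (x e.2) ∂(nu ℓ) := by
    simp [hTdef, hHdef, List.take_zero, List.not_mem_nil, if_false]
  have hTn : T L.length = ∫ x, ∏ e ∈ E, f (x e.1) (x e.2) ∂(nu ℓ) := by
    simp only [hTdef, hHdef, List.take_length]
    congr 1
    funext x
    refine Finset.prod_congr rfl fun e he => ?_
    rw [if_pos (by rw [hL]; exact Finset.mem_toList.mpr he)]
  have hm2 : ∀ m, ∀ e ∈ E, Measurable (Function.uncurry (H m e)) := by
    intro m e _
    simp only [hHdef]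
    split_ifs
    · exact hfm
    · exact hgm
  have hr2 : ∀ m, ∀ e ∈ E, ∀ x y, H m e x y ∈ Set.Icc (0:ℝ) 1 := by
    intro m e _ x y
    simp only [hHdef]
    split_ifs
    · exact hfr x y
    · exact hgr x y
  have step : ∀ m, m < L.length → |T (m + 1) - T m| ≤ cutDist f g := by
    intro m hm
    set e₀ := L.get ⟨m, hm⟩ with he₀def
    have he₀E : e₀ ∈ E := Finset.mem_toList.mp (List.get_mem L ⟨m, hm⟩)
    have htake : L.take (m + 1) = L.take m ++ [e₀] := by
      rw [List.take_succ]
      congr 1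
      rw [List.getElem?_eq_getElem hm]
      rfl
    have hnotin : e₀ ∉ L.take m := by
      intro hc
      have hnd' : (L.take (m + 1)).Nodup := hnd.sublist (List.take_sublist _ _)
      rw [htake, List.nodup_append] at hnd'
      exact hnd'.2.2 e₀ hc e₀ (List.mem_singleton.mpr rfl) rfl
    have hmemsucc : ∀ e, e ∈ L.take (m + 1) ↔ e ∈ L.take m ∨ e = e₀ := by
      intro e
      rw [htake, List.mem_append, List.mem_singleton]
    refine swap_bound hfm hgm hfr hgr hloop hsimple (H (m + 1)) (H m) e₀ he₀E
      (hm2 m) (hr2 m) ?_ ?_ ?_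
    · simp only [hHdef]
      rw [if_pos ((hmemsucc e₀).mpr (Or.inr rfl))]
    · simp only [hHdef]
      rw [if_neg hnotin]
    · intro e _ hne
      simp only [hHdef]
      by_cases hc : e ∈ L.take m
      · rw [if_pos hc, if_pos ((hmemsucc e).mpr (Or.inl hc))]
      · rw [if_neg hc, if_neg (fun hc2 => by
          rcases (hmemsucc e).mp hc2 with h | h
          · exact hc h
          · exact hne h)]
  have htel : T L.length - T 0 = ∑ m ∈ Finset.range L.length, (T (m + 1) - T m) :=
    (Finset.sum_range_sub T L.length).symm
  calc |(∫ x, ∏ e ∈ E, f (x e.1) (x e.2) ∂(nu ℓ))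
        - ∫ x, ∏ e ∈ E, g (x e.1) (x e.2) ∂(nu ℓ)|
      = |T L.length - T 0| := by rw [hTn, hT0]
    _ = |∑ m ∈ Finset.range L.length, (T (m + 1) - T m)| := by rw [htel]
    _ ≤ ∑ m ∈ Finset.range L.length, |T (m + 1) - T m| :=
        Finset.abs_sum_le_sum_abs _ _
    _ ≤ ∑ _m ∈ Finset.range L.length, cutDist f g :=
        Finset.sum_le_sum fun m hm => step m (Finset.mem_range.mp hm)
    _ = E.card * cutDist f g := by
        rw [Finset.sum_const, Finset.card_range, nsmul_eq_mul, hlen]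

end swap
end core
lemma homDensity_comp_mpbij {ℓ : ℕ} (E : Finset (Fin ℓ × Fin ℓ)) (σ : MPBij)
    (f : ℝ → ℝ → ℝ) (hfm : Measurable (Function.uncurry f)) :
    (∫ x, ∏ e ∈ E, f (σ.toFun (x e.1)) (σ.toFun (x e.2)) ∂(nu ℓ))
      = ∫ x, ∏ e ∈ E, f (x e.1) (x e.2) ∂(nu ℓ) := by
  have hSig : MeasurePreserving (fun (x : Fin ℓ → ℝ) (m : Fin ℓ) => σ.toFun (x m))
      (nu ℓ) (nu ℓ) := measurePreserving_pi _ _ (fun _ => σ.measPres)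
  have hΦm : Measurable fun x : Fin ℓ → ℝ => ∏ e ∈ E, f (x e.1) (x e.2) :=
    Finset.measurable_prod _ fun e _ => meas_pair hfm e.1 e.2
  calc (∫ x, ∏ e ∈ E, f (σ.toFun (x e.1)) (σ.toFun (x e.2)) ∂(nu ℓ))
      = ∫ x, (fun y : Fin ℓ → ℝ => ∏ e ∈ E, f (y e.1) (y e.2))
          ((fun (x : Fin ℓ → ℝ) (m : Fin ℓ) => σ.toFun (x m)) x) ∂(nu ℓ) := rfl
    _ = ∫ y, ∏ e ∈ E, f (y e.1) (y e.2)
          ∂(Measure.map (fun (x : Fin ℓ → ℝ) (m : Fin ℓ) => σ.toFun (x m)) (nu ℓ)) :=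
        (integral_map hSig.measurable.aemeasurable
          (by rw [hSig.map_eq]; exact hΦm.aestronglyMeasurable)).symm
    _ = ∫ y, ∏ e ∈ E, f (y e.1) (y e.2) ∂(nu ℓ) := by rw [hSig.map_eq]

instance : Nonempty MPBij :=
  ⟨⟨id, Set.bijOn_id _, MeasurePreserving.id _⟩⟩

lemma uncurry_comp_mpbij {f : ℝ → ℝ → ℝ} (hfm : Measurable (Function.uncurry f))
    (σ : MPBij) :
    Measurable (Function.uncurry fun x y => f (σ.toFun x) (σ.toFun y)) := by
  have h : (Function.uncurry fun x y => f (σ.toFun x) (σ.toFun y))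
      = Function.uncurry f ∘ Prod.map σ.toFun σ.toFun := rfl
  rw [h]
  exact hfm.comp (σ.measPres.measurable.prodMap σ.measPres.measurable)





end Aux

/-- the counting lemma for the cut distance `δ_□`: for a simple graph `H`
with `k` edges and graphons `f`, `g`, `|t(H,f) - t(H,g)| ≤ k · δ_□(f,g)`. -/
theorem homDensity_diff_le_cutDistDelta (ℓ : ℕ) (E : Finset (Fin ℓ × Fin ℓ))
    (hloop : ∀ e ∈ E, e.1 ≠ e.2) (hsimple : ∀ e ∈ E, (e.2, e.1) ∉ E)
    (k : ℕ) (hk : E.card = k)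
    (f g : ℝ → ℝ → ℝ)
    (hfm : Measurable (Function.uncurry f)) (hgm : Measurable (Function.uncurry g))
    (hfr : ∀ x y, f x y ∈ Set.Icc (0 : ℝ) 1) (hgr : ∀ x y, g x y ∈ Set.Icc (0 : ℝ) 1)
    (hfs : ∀ x y, f x y = f y x) (hgs : ∀ x y, g x y = g y x) :
    |homDensity ℓ E f - homDensity ℓ E g| ≤ k * cutDistDelta f g := by
  have hHD : ∀ h : ℝ → ℝ → ℝ,
      homDensity ℓ E h = ∫ x, ∏ e ∈ E, h (x e.1) (x e.2) ∂(nu ℓ) := fun h => rfl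
  have hmain : ∀ σ₁ σ₂ : MPBij, |homDensity ℓ E f - homDensity ℓ E g|
      ≤ (k : ℝ) * cutDist (fun x y => f (σ₁.toFun x) (σ₁.toFun y))
          (fun x y => g (σ₂.toFun x) (σ₂.toFun y)) := by
    intro σ₁ σ₂
    set f' : ℝ → ℝ → ℝ := fun x y => f (σ₁.toFun x) (σ₁.toFun y) with hf'
    set g' : ℝ → ℝ → ℝ := fun x y => g (σ₂.toFun x) (σ₂.toFun y) with hg'
    have hf'm : Measurable (Function.uncurry f') := uncurry_comp_mpbij hfm σ₁
    have hg'm : Measurable (Function.uncurry g') := uncurry_comp_mpbij hgm σ₂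
    have hf'r : ∀ x y, f' x y ∈ Set.Icc (0:ℝ) 1 := fun x y => hfr _ _
    have hg'r : ∀ x y, g' x y ∈ Set.Icc (0:ℝ) 1 := fun x y => hgr _ _
    have hcount := counting hf'm hg'm hf'r hg'r hloop hsimple
    have h1 : (∫ x, ∏ e ∈ E, f' (x e.1) (x e.2) ∂(nu ℓ)) = homDensity ℓ E f := by
      rw [hHD f]
      exact homDensity_comp_mpbij E σ₁ f hfm
    have h2 : (∫ x, ∏ e ∈ E, g' (x e.1) (x e.2) ∂(nu ℓ)) = homDensity ℓ E g := by
      rw [hHD g]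
      exact homDensity_comp_mpbij E σ₂ g hgm
    rw [h1, h2, hk] at hcount
    exact hcount
  rcases Nat.eq_zero_or_pos k with hk0 | hkpos
  · subst hk0
    have hE : E = ∅ := Finset.card_eq_zero.mp hk
    subst hE
    simp [hHD]
  · have hkR : (0:ℝ) < k := by exact_mod_cast hkpos
    have hinf : |homDensity ℓ E f - homDensity ℓ E g| / k ≤ cutDistDelta f g := by
      refine le_ciInf fun σ₁ => le_ciInf fun σ₂ => ?_
      rw [div_le_iff₀ hkR, mul_comm]
      exact hmain σ₁ σ₂
    calc |homDensity ℓ E f - homDensity ℓ E g|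
        = k * (|homDensity ℓ E f - homDensity ℓ E g| / k) := by field_simp
      _ ≤ k * cutDistDelta f g := by
          exact mul_le_mul_of_nonneg_left hinf hkR.le
end

section
/- For any finite simple graph H with ℓ vertices and any graphons f, g with d_□(f,g) ≤ ε, the homomorphism densities satisfy |t(H,f) - t(H,g)| ≤ |E(H)|·ε, where |E(H)| is the number of edges of H. -/
open MeasureTheory

noncomputable def CLmu : Measure ℝ := volume.restrict (Set.Icc 0 1)

instance : IsProbabilityMeasure CLmu := by
  constructor
  simp [CLmu, Real.volume_Icc]

lemma CL_integrable_bdd {α : Type*} [MeasurableSpace α] (ν : Measure α) [IsFiniteMeasure ν]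
    {F : α → ℝ} (hm : AEStronglyMeasurable F ν) {C : ℝ} (h : ∀ x, |F x| ≤ C) :
    Integrable F ν :=
  (integrable_const C).mono' hm (Filter.Eventually.of_forall h)

lemma CL_avg (ε : ℝ) (Φ u : ℝ → ℝ) (hΦm : StronglyMeasurable Φ) (hΦb : ∀ s, |Φ s| ≤ 1)
    (hu : Measurable u) (hur : ∀ s, u s ∈ Set.Icc (0:ℝ) 1)
    (hb : ∀ S : Set ℝ, MeasurableSet S → |∫ s in S, Φ s ∂CLmu| ≤ ε) :
    |∫ s, u s * Φ s ∂CLmu| ≤ ε := by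
  have hΦi : Integrable Φ CLmu := CL_integrable_bdd _ hΦm.aestronglyMeasurable hΦb
  have huib : ∀ s, |u s * Φ s| ≤ 1 := by
    intro s
    rw [abs_mul]
    have h1 := hur s
    have h2 := hΦb s
    have h3 : |u s| ≤ 1 := abs_le.2 ⟨by linarith [h1.1], h1.2⟩
    nlinarith [abs_nonneg (u s), abs_nonneg (Φ s)]
  have hui : Integrable (fun s => u s * Φ s) CLmu :=
    CL_integrable_bdd _ ((hu.mul hΦm.measurable).aestronglyMeasurable) huib
  set Sp : Set ℝ := {s | 0 ≤ Φ s} with hSpdef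
  have hSp : MeasurableSet Sp := measurableSet_le measurable_const hΦm.measurable
  set Sn : Set ℝ := {s | Φ s < 0} with hSndef
  have hSn : MeasurableSet Sn := measurableSet_lt hΦm.measurable measurable_const
  have hup : ∫ s, u s * Φ s ∂CLmu ≤ ∫ s in Sp, Φ s ∂CLmu := by
    rw [← integral_indicator hSp]
    refine integral_mono hui (hΦi.indicator hSp) ?_
    intro s
    beta_reduce
    by_cases h : s ∈ Sp
    · rw [Set.indicator_of_mem h]
      obtain ⟨h0, h1⟩ := hur s
      have h2 : (0:ℝ) ≤ Φ s := h
      nlinarith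
    · rw [Set.indicator_of_notMem h]
      have h2 : Φ s < 0 := by simpa [hSpdef] using h
      obtain ⟨h0, h1⟩ := hur s
      nlinarith
  have hlow : ∫ s in Sn, Φ s ∂CLmu ≤ ∫ s, u s * Φ s ∂CLmu := by
    rw [← integral_indicator hSn]
    refine integral_mono (hΦi.indicator hSn) hui ?_
    intro s
    beta_reduce
    by_cases h : s ∈ Sn
    · rw [Set.indicator_of_mem h]
      have h2 : Φ s < 0 := h
      obtain ⟨h0, h1⟩ := hur s
      nlinarith
    · rw [Set.indicator_of_notMem h]
      have h2 : 0 ≤ Φ s := by simpa [hSndef] using h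
      obtain ⟨h0, h1⟩ := hur s
      nlinarith
  have h1 := hb Sp hSp
  have h2 := hb Sn hSn
  rw [abs_le] at h1 h2 ⊢
  exact ⟨by linarith [h2.1], by linarith [h1.2]⟩

lemma CL_psi_bound {W : ℝ → ℝ → ℝ} (hWm : Measurable (Function.uncurry W))
    (hWb : ∀ s t, |W s t| ≤ 1) (S : Set ℝ) (t : ℝ) :
    |∫ s in S, W s t ∂CLmu| ≤ 1 := by
  have h := norm_integral_le_of_norm_le_const (μ := CLmu.restrict S)
    (f := fun s => W s t) (C := 1) (Filter.Eventually.of_forall fun s => by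
      simpa using hWb s t)
  have h2 : (CLmu.restrict S Set.univ).toReal ≤ 1 := by
    have : CLmu.restrict S Set.univ ≤ 1 := le_trans (Measure.restrict_le_self _) prob_le_one
    exact ENNReal.toReal_le_of_le_ofReal zero_le_one (by simpa using this)
  calc |∫ s in S, W s t ∂CLmu| ≤ 1 * (CLmu.restrict S Set.univ).toReal := by simpa [Measure.real] using h
    _ ≤ 1 := by linarith

lemma CL_uncurry_int {W : ℝ → ℝ → ℝ} (hWm : Measurable (Function.uncurry W))
    (hWb : ∀ s t, |W s t| ≤ 1) (ν₁ ν₂ : Measure ℝ) [IsFiniteMeasure ν₁] [IsFiniteMeasure ν₂] :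
    Integrable (Function.uncurry W) (ν₁.prod ν₂) :=
  CL_integrable_bdd _ hWm.aestronglyMeasurable (fun p => hWb p.1 p.2)

lemma CL_step1 (W : ℝ → ℝ → ℝ) (hWm : Measurable (Function.uncurry W))
    (hWb : ∀ s t, |W s t| ≤ 1) (ε : ℝ)
    (hε : ∀ S T : Set ℝ, MeasurableSet S → MeasurableSet T →
      |∫ s in S, ∫ t in T, W s t ∂CLmu ∂CLmu| ≤ ε)
    {S : Set ℝ} (hS : MeasurableSet S) (v : ℝ → ℝ) (hv : Measurable v)
    (hvr : ∀ t, v t ∈ Set.Icc (0:ℝ) 1) :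
    |∫ s in S, ∫ t, W s t * v t ∂CLmu ∂CLmu| ≤ ε := by
  set Ψ : ℝ → ℝ := fun t => ∫ s in S, W s t ∂CLmu with hΨdef
  have hΨm : StronglyMeasurable Ψ :=
    (hWm.stronglyMeasurable (f := Function.uncurry W)).integral_prod_left
  have hΨb : ∀ t, |Ψ t| ≤ 1 := fun t => CL_psi_bound hWm hWb S t
  have hWvm : Measurable (Function.uncurry fun s t => W s t * v t) := by
    have : (Function.uncurry fun s t => W s t * v t)
        = fun p : ℝ × ℝ => Function.uncurry W p * v p.2 := by
      ext p; simp [Function.uncurry]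
    rw [this]
    exact hWm.mul (hv.comp measurable_snd)
  have hswap : ∫ s in S, ∫ t, W s t * v t ∂CLmu ∂CLmu = ∫ t, v t * Ψ t ∂CLmu := by
    rw [integral_integral_swap (CL_integrable_bdd _ hWvm.aestronglyMeasurable
      (C := 1) (fun p => by
        simp only [Function.uncurry]
        rw [abs_mul]
        obtain ⟨h0, h1⟩ := hvr p.2
        have := hWb p.1 p.2
        have h3 : |v p.2| ≤ 1 := abs_le.2 ⟨by linarith, h1⟩
        nlinarith [abs_nonneg (W p.1 p.2), abs_nonneg (v p.2)]))]
    congr 1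
    ext t
    rw [integral_mul_const, mul_comm]
  rw [hswap]
  refine CL_avg ε Ψ v hΨm hΨb hv hvr ?_
  intro T hT
  have hswap2 : ∫ t in T, Ψ t ∂CLmu = ∫ s in S, ∫ t in T, W s t ∂CLmu ∂CLmu := by
    exact (integral_integral_swap (f := fun t s => W s t)
      (μ := CLmu.restrict T) (ν := CLmu.restrict S)
      (CL_integrable_bdd _ ((hWm.comp measurable_swap).aestronglyMeasurable)
        (C := 1) (fun p => by simpa [Function.uncurry] using hWb p.2 p.1)))
  rw [hswap2]
  exact hε S T hS hT

lemma CL_bilin (W : ℝ → ℝ → ℝ) (hWm : Measurable (Function.uncurry W))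
    (hWb : ∀ s t, |W s t| ≤ 1) (ε : ℝ)
    (hε : ∀ S T : Set ℝ, MeasurableSet S → MeasurableSet T →
      |∫ s in S, ∫ t in T, W s t ∂CLmu ∂CLmu| ≤ ε)
    (u v : ℝ → ℝ) (hu : Measurable u) (hv : Measurable v)
    (hur : ∀ s, u s ∈ Set.Icc (0:ℝ) 1) (hvr : ∀ t, v t ∈ Set.Icc (0:ℝ) 1) :
    |∫ s, ∫ t, W s t * (u s * v t) ∂CLmu ∂CLmu| ≤ ε := by
  set Φ : ℝ → ℝ := fun s => ∫ t, W s t * v t ∂CLmu with hΦdef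
  have hWvm : Measurable (Function.uncurry fun s t => W s t * v t) := by
    have : (Function.uncurry fun s t => W s t * v t)
        = fun p : ℝ × ℝ => Function.uncurry W p * v p.2 := by
      ext p; simp [Function.uncurry]
    rw [this]
    exact hWm.mul (hv.comp measurable_snd)
  have hΦm : StronglyMeasurable Φ :=
    (hWvm.stronglyMeasurable (f := Function.uncurry fun s t => W s t * v t)).integral_prod_right
  have hΦb : ∀ s, |Φ s| ≤ 1 := by
    intro s
    have h := norm_integral_le_of_norm_le_const (μ := CLmu)
      (f := fun t => W s t * v t) (C := 1) (Filter.Eventually.of_forall fun t => by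
        simp only [Real.norm_eq_abs]
        rw [abs_mul]
        obtain ⟨h0, h1⟩ := hvr t
        have := hWb s t
        have h3 : |v t| ≤ 1 := abs_le.2 ⟨by linarith, h1⟩
        nlinarith [abs_nonneg (W s t), abs_nonneg (v t)])
    simpa using h
  have hpt : ∀ s, ∫ t, W s t * (u s * v t) ∂CLmu = u s * Φ s := by
    intro s
    rw [hΦdef]
    simp only
    rw [← integral_const_mul]
    congr 1
    ext t
    ring
  calc |∫ s, ∫ t, W s t * (u s * v t) ∂CLmu ∂CLmu| = |∫ s, u s * Φ s ∂CLmu| := by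
        congr 1
        exact integral_congr_ae (Filter.Eventually.of_forall hpt)
    _ ≤ ε := CL_avg ε Φ u hΦm hΦb hu hur (fun S hS => by
        have : ∫ s in S, Φ s ∂CLmu = ∫ s in S, ∫ t, W s t * v t ∂CLmu ∂CLmu := rfl
        rw [this]
        exact CL_step1 W hWm hWb ε hε hS v hv hvr)

lemma CL_term_bound {W : ℝ → ℝ → ℝ} (hWm : Measurable (Function.uncurry W))
    (hWb : ∀ s t, |W s t| ≤ 1) (S T : Set ℝ) :
    |∫ s in S, ∫ t in T, W s t ∂CLmu ∂CLmu| ≤ 1 := by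
  have inner : ∀ s, |∫ t in T, W s t ∂CLmu| ≤ 1 := by
    intro s
    exact CL_psi_bound (W := fun t s => W s t) (hWm.comp measurable_swap)
      (fun t s => hWb s t) T s
  have h := norm_integral_le_of_norm_le_const (μ := CLmu.restrict S)
    (f := fun s => ∫ t in T, W s t ∂CLmu) (C := 1)
    (Filter.Eventually.of_forall fun s => by simpa using inner s)
  have h2 : (CLmu.restrict S Set.univ).toReal ≤ 1 := by
    have : CLmu.restrict S Set.univ ≤ 1 := le_trans (Measure.restrict_le_self _) prob_le_one
    exact ENNReal.toReal_le_of_le_ofReal zero_le_one (by simpa using this)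
  calc |∫ s in S, ∫ t in T, W s t ∂CLmu ∂CLmu|
      ≤ 1 * (CLmu.restrict S Set.univ).toReal := by simpa [Measure.real] using h
    _ ≤ 1 := by linarith

lemma CL_le_cutDist (f g : ℝ → ℝ → ℝ)
    (hfm : Measurable (Function.uncurry f)) (hgm : Measurable (Function.uncurry g))
    (hfr : ∀ x y, f x y ∈ Set.Icc (0 : ℝ) 1) (hgr : ∀ x y, g x y ∈ Set.Icc (0 : ℝ) 1)
    {S T : Set ℝ} (hS : MeasurableSet S) (hT : MeasurableSet T) :
    |∫ s in S, ∫ t in T, (f s t - g s t) ∂CLmu ∂CLmu| ≤ cutDist f g := by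
  have hWm : Measurable (Function.uncurry fun s t => f s t - g s t) := by
    have : (Function.uncurry fun s t => f s t - g s t)
        = fun p : ℝ × ℝ => Function.uncurry f p - Function.uncurry g p := by
      ext p; simp [Function.uncurry]
    rw [this]; exact hfm.sub hgm
  have hWb : ∀ s t, |f s t - g s t| ≤ 1 := by
    intro s t
    obtain ⟨h1, h2⟩ := hfr s t
    obtain ⟨h3, h4⟩ := hgr s t
    rw [abs_le]; constructor <;> linarith
  -- rewrite restricted integrals in cutDist form
  have key : ∀ (A B : Set ℝ), MeasurableSet A → MeasurableSet B →
      (∫ s in A, ∫ t in B, (f s t - g s t) ∂CLmu ∂CLmu)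
        = ∫ x in A ∩ Set.Icc 0 1, ∫ y in B ∩ Set.Icc 0 1, (f x y - g x y) := by
    intro A B hA hB
    rw [show CLmu.restrict A = volume.restrict (A ∩ Set.Icc 0 1) from
        Measure.restrict_restrict hA,
      show CLmu.restrict B = volume.restrict (B ∩ Set.Icc 0 1) from
        Measure.restrict_restrict hB]
  have hbd : ∀ A : {S : Set ℝ // MeasurableSet S}, ∀ B : {T : Set ℝ // MeasurableSet T},
      |∫ x in A.1 ∩ Set.Icc 0 1, ∫ y in B.1 ∩ Set.Icc 0 1, (f x y - g x y)| ≤ 1 := by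
    intro A B
    rw [← key A.1 B.1 A.2 B.2]
    exact CL_term_bound hWm hWb A.1 B.1
  have hbdd_inner : ∀ A : {S : Set ℝ // MeasurableSet S},
      BddAbove (Set.range fun B : {T : Set ℝ // MeasurableSet T} =>
        |∫ x in A.1 ∩ Set.Icc 0 1, ∫ y in B.1 ∩ Set.Icc 0 1, (f x y - g x y)|) :=
    fun A => ⟨1, by rintro r ⟨B, rfl⟩; exact hbd A B⟩
  have hbdd_outer : BddAbove (Set.range fun A : {S : Set ℝ // MeasurableSet S} =>
      ⨆ B : {T : Set ℝ // MeasurableSet T},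
        |∫ x in A.1 ∩ Set.Icc 0 1, ∫ y in B.1 ∩ Set.Icc 0 1, (f x y - g x y)|) := by
    refine ⟨1, ?_⟩
    rintro r ⟨A, rfl⟩
    exact ciSup_le fun B => hbd A B
  rw [key S T hS hT]
  calc |∫ x in S ∩ Set.Icc 0 1, ∫ y in T ∩ Set.Icc 0 1, (f x y - g x y)|
      ≤ ⨆ B : {T : Set ℝ // MeasurableSet T},
          |∫ x in S ∩ Set.Icc 0 1, ∫ y in B.1 ∩ Set.Icc 0 1, (f x y - g x y)| :=
        le_ciSup (hbdd_inner ⟨S, hS⟩) ⟨T, hT⟩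
    _ ≤ cutDist f g := le_ciSup hbdd_outer ⟨S, hS⟩

lemma CL_mp_update {ℓ : ℕ} {a b : Fin ℓ} (hab : a ≠ b) :
    MeasurePreserving
      (fun p : (Fin ℓ → ℝ) × (ℝ × ℝ) =>
        Function.update (Function.update p.1 a p.2.1) b p.2.2)
      ((Measure.pi fun _ => CLmu).prod (CLmu.prod CLmu))
      (Measure.pi fun _ => CLmu) := by
  have hmeas : Measurable (fun p : (Fin ℓ → ℝ) × (ℝ × ℝ) =>
      Function.update (Function.update p.1 a p.2.1) b p.2.2) := by
    exact measurable_update'.comp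
      ((measurable_update'.comp (measurable_fst.prodMk measurable_snd.fst)).prodMk
        measurable_snd.snd)
  refine ⟨hmeas, ?_⟩
  refine (Measure.pi_eq (μ := fun _ : Fin ℓ => CLmu) fun S hS => ?_).symm
  rw [Measure.map_apply hmeas (MeasurableSet.univ_pi hS)]
  have hpre : (fun p : (Fin ℓ → ℝ) × (ℝ × ℝ) =>
        Function.update (Function.update p.1 a p.2.1) b p.2.2) ⁻¹' (Set.pi Set.univ S)
      = (Set.pi Set.univ fun i => if i = a ∨ i = b then (Set.univ : Set ℝ) else S i)
        ×ˢ (S a ×ˢ S b) := by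
    ext ⟨z, s, t⟩
    simp only [Set.mem_preimage, Set.mem_pi, Set.mem_univ, forall_true_left, Set.mem_prod,
      Function.update_apply]
    constructor
    · intro h
      refine ⟨fun i => ?_, ?_, ?_⟩
      · by_cases h1 : i = a
        · simp [h1]
        · by_cases h2 : i = b
          · simp [h2]
          · have := h i; simp only [h1, h2, if_false] at this; simp [h1, h2, this]
      · have := h a; simpa [hab] using this
      · have := h b; simpa using this
    · rintro ⟨hz, hs, ht⟩ i
      by_cases h2 : i = b
      · subst h2; simpa using ht
      · by_cases h1 : i = a
        · subst h1; simpa [h2] using hs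
        · have := hz i; simp only [h1, h2, or_self, if_false] at this
          simpa [h1, h2] using this
  rw [hpre, Measure.prod_prod, Measure.prod_prod, Measure.pi_pi]
  have key : ∀ h : Fin ℓ → ENNReal,
      ∏ i, h i = h a * (h b * ∏ i ∈ (Finset.univ.erase a).erase b, h i) := by
    intro h
    rw [← Finset.mul_prod_erase Finset.univ h (Finset.mem_univ a),
        ← Finset.mul_prod_erase (Finset.univ.erase a) h
          (Finset.mem_erase.2 ⟨Ne.symm hab, Finset.mem_univ b⟩)]
  rw [key (fun i => CLmu (if i = a ∨ i = b then Set.univ else S i)), key (fun i => CLmu (S i))]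
  have ha : CLmu (if a = a ∨ a = b then (Set.univ : Set ℝ) else S a) = 1 := by
    simp [measure_univ]
  have hb : CLmu (if b = a ∨ b = b then (Set.univ : Set ℝ) else S b) = 1 := by
    simp [measure_univ]
  have hrest : ∏ i ∈ (Finset.univ.erase a).erase b,
      CLmu (if i = a ∨ i = b then Set.univ else S i)
      = ∏ i ∈ (Finset.univ.erase a).erase b, CLmu (S i) := by
    refine Finset.prod_congr rfl fun i hi => ?_
    rw [Finset.mem_erase, Finset.mem_erase] at hi
    simp [hi.1, hi.2.1]
  rw [ha, hb, hrest]
  ring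

lemma CL_prod_mem {ℓ : ℕ} (s : Finset (Fin ℓ × Fin ℓ)) (k : (Fin ℓ × Fin ℓ) → ℝ → ℝ → ℝ)
    (hkr : ∀ e' x y, k e' x y ∈ Set.Icc (0:ℝ) 1) (x : Fin ℓ → ℝ) :
    (∏ e' ∈ s, k e' (x e'.1) (x e'.2)) ∈ Set.Icc (0:ℝ) 1 :=
  ⟨Finset.prod_nonneg fun e' _ => (hkr e' _ _).1,
   Finset.prod_le_one (fun e' _ => (hkr e' _ _).1) (fun e' _ => (hkr e' _ _).2)⟩

lemma CL_prod_meas {ℓ : ℕ} (s : Finset (Fin ℓ × Fin ℓ)) (k : (Fin ℓ × Fin ℓ) → ℝ → ℝ → ℝ)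
    (hk : ∀ e', Measurable (Function.uncurry (k e'))) :
    Measurable fun x : Fin ℓ → ℝ => ∏ e' ∈ s, k e' (x e'.1) (x e'.2) := by
  refine Finset.measurable_prod _ fun e' _ => ?_
  have hpair : Measurable fun x : Fin ℓ → ℝ => (x e'.1, x e'.2) :=
    (measurable_pi_apply e'.1).prodMk (measurable_pi_apply e'.2)
  exact (hk e').comp hpair

lemma CL_onestep {ℓ : ℕ} (E : Finset (Fin ℓ × Fin ℓ))
    (hloop : ∀ e' ∈ E, e'.1 ≠ e'.2) (hsimple : ∀ e' ∈ E, (e'.2, e'.1) ∉ E)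
    (e : Fin ℓ × Fin ℓ) (heE : e ∈ E)
    (c d : (Fin ℓ × Fin ℓ) → ℝ → ℝ → ℝ)
    (hc : ∀ e', Measurable (Function.uncurry (c e')))
    (hcr : ∀ e' x y, c e' x y ∈ Set.Icc (0:ℝ) 1)
    (hd : ∀ e', Measurable (Function.uncurry (d e')))
    (hdr : ∀ e' x y, d e' x y ∈ Set.Icc (0:ℝ) 1)
    (hagree : ∀ e' ∈ E.erase e, c e' = d e')
    (ε : ℝ)
    (hε : ∀ S T : Set ℝ, MeasurableSet S → MeasurableSet T →
      |∫ s in S, ∫ t in T, (c e s t - d e s t) ∂CLmu ∂CLmu| ≤ ε) :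
    |(∫ x : Fin ℓ → ℝ, ∏ e' ∈ E, c e' (x e'.1) (x e'.2) ∂(Measure.pi fun _ => CLmu))
      - ∫ x : Fin ℓ → ℝ, ∏ e' ∈ E, d e' (x e'.1) (x e'.2) ∂(Measure.pi fun _ => CLmu)| ≤ ε := by
  have hab : e.1 ≠ e.2 := hloop e heE
  set G : (Fin ℓ → ℝ) → ℝ := fun x =>
    (c e (x e.1) (x e.2) - d e (x e.1) (x e.2)) *
      ∏ e' ∈ E.erase e, c e' (x e'.1) (x e'.2) with hG
  have hGm : Measurable G := by
    have hpair : Measurable fun x : Fin ℓ → ℝ => (x e.1, x e.2) :=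
      (measurable_pi_apply e.1).prodMk (measurable_pi_apply e.2)
    exact (((hc e).comp hpair).sub ((hd e).comp hpair)).mul (CL_prod_meas (E.erase e) c hc)
  have hGb : ∀ x, |G x| ≤ 1 := by
    intro x
    simp only [hG]
    obtain ⟨p0, p1⟩ := CL_prod_mem (E.erase e) c hcr x
    obtain ⟨c0, c1⟩ := hcr e (x e.1) (x e.2)
    obtain ⟨d0, d1⟩ := hdr e (x e.1) (x e.2)
    rw [abs_mul]
    have h1 : |c e (x e.1) (x e.2) - d e (x e.1) (x e.2)| ≤ 1 :=
      abs_le.2 ⟨by linarith, by linarith⟩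
    have h2 : |∏ e' ∈ E.erase e, c e' (x e'.1) (x e'.2)| ≤ 1 := abs_le.2 ⟨by linarith, p1⟩
    nlinarith [abs_nonneg (c e (x e.1) (x e.2) - d e (x e.1) (x e.2)),
      abs_nonneg (∏ e' ∈ E.erase e, c e' (x e'.1) (x e'.2))]
  have hintc : Integrable (fun x : Fin ℓ → ℝ => ∏ e' ∈ E, c e' (x e'.1) (x e'.2))
      (Measure.pi fun _ => CLmu) :=
    CL_integrable_bdd _ (CL_prod_meas E c hc).aestronglyMeasurable (C := 1)
      (fun x => abs_le.2 ⟨by linarith [(CL_prod_mem E c hcr x).1], (CL_prod_mem E c hcr x).2⟩)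
  have hintd : Integrable (fun x : Fin ℓ → ℝ => ∏ e' ∈ E, d e' (x e'.1) (x e'.2))
      (Measure.pi fun _ => CLmu) :=
    CL_integrable_bdd _ (CL_prod_meas E d hd).aestronglyMeasurable (C := 1)
      (fun x => abs_le.2 ⟨by linarith [(CL_prod_mem E d hdr x).1], (CL_prod_mem E d hdr x).2⟩)
  have hdiff : (∫ x : Fin ℓ → ℝ, ∏ e' ∈ E, c e' (x e'.1) (x e'.2) ∂(Measure.pi fun _ => CLmu))
      - (∫ x : Fin ℓ → ℝ, ∏ e' ∈ E, d e' (x e'.1) (x e'.2) ∂(Measure.pi fun _ => CLmu))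
      = ∫ x, G x ∂(Measure.pi fun _ => CLmu) := by
    rw [← integral_sub hintc hintd]
    refine integral_congr_ae (Filter.Eventually.of_forall fun x => ?_)
    simp only [hG]
    rw [← Finset.mul_prod_erase E (fun e' => c e' (x e'.1) (x e'.2)) heE,
      ← Finset.mul_prod_erase E (fun e' => d e' (x e'.1) (x e'.2)) heE]
    have hsame : ∏ e' ∈ E.erase e, d e' (x e'.1) (x e'.2)
        = ∏ e' ∈ E.erase e, c e' (x e'.1) (x e'.2) :=
      Finset.prod_congr rfl fun e' he' => by rw [hagree e' he']
    rw [hsame]; ring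
  rw [hdiff]
  have hmp := CL_mp_update (ℓ := ℓ) hab
  set T : (Fin ℓ → ℝ) × (ℝ × ℝ) → (Fin ℓ → ℝ) := fun p =>
    Function.update (Function.update p.1 e.1 p.2.1) e.2 p.2.2 with hT
  have hmap : ∫ x, G x ∂(Measure.pi fun _ => CLmu)
      = ∫ p, G (T p) ∂((Measure.pi fun _ => CLmu).prod (CLmu.prod CLmu)) := by
    conv_lhs => rw [← hmp.map_eq]
    exact integral_map hmp.measurable.aemeasurable hGm.aestronglyMeasurable
  have hint2 : Integrable (fun p => G (T p))
      ((Measure.pi fun _ => CLmu).prod (CLmu.prod CLmu)) :=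
    CL_integrable_bdd _ ((hGm.comp hmp.measurable).aestronglyMeasurable) (fun p => hGb _)
  rw [hmap, integral_prod _ hint2]
  have key : ∀ z : Fin ℓ → ℝ, |∫ q : ℝ × ℝ, G (T (z, q)) ∂(CLmu.prod CLmu)| ≤ ε := by
    intro z
    set U : ℝ → ℝ := fun s =>
      ∏ e' ∈ (E.erase e).filter (fun e' => e'.1 = e.1 ∨ e'.2 = e.1),
        c e' (Function.update z e.1 s e'.1) (Function.update z e.1 s e'.2) with hU
    set V : ℝ → ℝ := fun t =>
      ∏ e' ∈ (E.erase e).filter (fun e' => ¬(e'.1 = e.1 ∨ e'.2 = e.1)),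
        c e' (Function.update z e.2 t e'.1) (Function.update z e.2 t e'.2) with hV
    have hfact : ∀ s t : ℝ, G (T (z, (s, t))) = (c e s t - d e s t) * (U s * V t) := by
      intro s t
      have hXa : ∀ v : Fin ℓ, v ≠ e.2 →
          Function.update (Function.update z e.1 s) e.2 t v = Function.update z e.1 s v :=
        fun v hv => Function.update_of_ne hv _ _
      have hXb : ∀ v : Fin ℓ, v ≠ e.1 →
          Function.update (Function.update z e.1 s) e.2 t v = Function.update z e.2 t v := by
        intro v hv
        by_cases h : v = e.2
        · subst h; simp
        · rw [Function.update_of_ne h, Function.update_of_ne hv, Function.update_of_ne h]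
      have hxa : Function.update (Function.update z e.1 s) e.2 t e.1 = s := by
        rw [hXa e.1 hab, Function.update_self]
      have hxb : Function.update (Function.update z e.1 s) e.2 t e.2 = t :=
        Function.update_self _ _ _
      simp only [hG, hT, hU, hV]
      rw [hxa, hxb]
      congr 1
      rw [← Finset.prod_filter_mul_prod_filter_not (E.erase e)
        (fun e' => e'.1 = e.1 ∨ e'.2 = e.1)]
      congr 1
      · refine Finset.prod_congr rfl fun e' he' => ?_
        rw [Finset.mem_filter, Finset.mem_erase] at he'
        obtain ⟨⟨hne, hmem⟩, hP⟩ := he'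
        have h1 : e'.1 ≠ e.2 := by
          rcases hP with h | h
          · rw [h]; exact hab
          · intro hc2
            have he' : e' = (e.2, e.1) := Prod.ext hc2 h
            exact hsimple e heE (he' ▸ hmem)
        have h2 : e'.2 ≠ e.2 := by
          rcases hP with h | h
          · intro hc2
            exact hne (Prod.ext h hc2)
          · rw [h]; exact hab
        rw [hXa e'.1 h1, hXa e'.2 h2]
      · refine Finset.prod_congr rfl fun e' he' => ?_
        rw [Finset.mem_filter] at he'
        push_neg at he'
        obtain ⟨-, h1, h2⟩ := he'
        rw [hXb e'.1 h1, hXb e'.2 h2]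
    have hWm' : Measurable (Function.uncurry fun s t => c e s t - d e s t) := by
      have : (Function.uncurry fun s t => c e s t - d e s t)
          = fun p : ℝ × ℝ => Function.uncurry (c e) p - Function.uncurry (d e) p := by
        ext p; simp [Function.uncurry]
      rw [this]; exact (hc e).sub (hd e)
    have hWb' : ∀ s t, |c e s t - d e s t| ≤ 1 := by
      intro s t
      obtain ⟨c0, c1⟩ := hcr e s t
      obtain ⟨d0, d1⟩ := hdr e s t
      exact abs_le.2 ⟨by linarith, by linarith⟩
    have hUm : Measurable U := by
      simp only [hU]
      refine Finset.measurable_prod _ fun e' _ => ?_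
      exact (hc e').comp
        (((measurable_pi_apply e'.1).comp (measurable_update z)).prodMk
          ((measurable_pi_apply e'.2).comp (measurable_update z)))
    have hVm : Measurable V := by
      simp only [hV]
      refine Finset.measurable_prod _ fun e' _ => ?_
      exact (hc e').comp
        (((measurable_pi_apply e'.1).comp (measurable_update z)).prodMk
          ((measurable_pi_apply e'.2).comp (measurable_update z)))
    have hUr : ∀ s, U s ∈ Set.Icc (0:ℝ) 1 := fun s =>
      CL_prod_mem _ c hcr (Function.update z e.1 s)
    have hVr : ∀ t, V t ∈ Set.Icc (0:ℝ) 1 := fun t =>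
      CL_prod_mem _ c hcr (Function.update z e.2 t)
    have hq : ∫ q : ℝ × ℝ, G (T (z, q)) ∂(CLmu.prod CLmu)
        = ∫ s, ∫ t, (c e s t - d e s t) * (U s * V t) ∂CLmu ∂CLmu := by
      have hint3 : Integrable (fun q : ℝ × ℝ => G (T (z, q))) (CLmu.prod CLmu) :=
        CL_integrable_bdd _ (Measurable.aestronglyMeasurable (by
          exact hGm.comp (hmp.measurable.comp measurable_prodMk_left))) (fun q => hGb _)
      rw [integral_prod _ hint3]
      refine integral_congr_ae (Filter.Eventually.of_forall fun s => ?_)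
      refine integral_congr_ae (Filter.Eventually.of_forall fun t => ?_)
      exact hfact s t
    rw [hq]
    exact CL_bilin _ hWm' hWb' ε hε U V hUm hVm hUr hVr
  have h := norm_integral_le_of_norm_le_const (μ := Measure.pi fun _ : Fin ℓ => CLmu) (C := ε)
    (f := fun z : Fin ℓ → ℝ => ∫ q : ℝ × ℝ, G (T (z, q)) ∂(CLmu.prod CLmu))
    (Filter.Eventually.of_forall fun z => by simpa using key z)
  calc |∫ z : Fin ℓ → ℝ, ∫ q : ℝ × ℝ, G (T (z, q)) ∂(CLmu.prod CLmu)
        ∂(Measure.pi fun _ => CLmu)|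
      ≤ ε * ((Measure.pi fun _ : Fin ℓ => CLmu) Set.univ).toReal := by simpa using h
    _ = ε := by simp [measure_univ]

noncomputable def CL_D {ℓ : ℕ} (E : Finset (Fin ℓ × Fin ℓ)) (f g : ℝ → ℝ → ℝ)
    (A : Finset (Fin ℓ × Fin ℓ)) : ℝ :=
  ∫ x : Fin ℓ → ℝ, ∏ e' ∈ E, (if e' ∈ A then g else f) (x e'.1) (x e'.2)
    ∂(Measure.pi fun _ => CLmu)

theorem counting_lemma' (ℓ : ℕ) (E : Finset (Fin ℓ × Fin ℓ))
    (hloop : ∀ e ∈ E, e.1 ≠ e.2) (hsimple : ∀ e ∈ E, (e.2, e.1) ∉ E)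
    (f g : ℝ → ℝ → ℝ)
    (hfm : Measurable (Function.uncurry f)) (hgm : Measurable (Function.uncurry g))
    (hfr : ∀ x y, f x y ∈ Set.Icc (0 : ℝ) 1) (hgr : ∀ x y, g x y ∈ Set.Icc (0 : ℝ) 1)
    (ε : ℝ) (hd : cutDist f g ≤ ε) :
    |homDensity ℓ E f - homDensity ℓ E g| ≤ E.card * ε := by
  classical
  have hcm : ∀ (A : Finset (Fin ℓ × Fin ℓ)) (e' : Fin ℓ × Fin ℓ),
      Measurable (Function.uncurry fun x y => (if e' ∈ A then g else f) x y) := by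
    intro A e'
    by_cases h : e' ∈ A
    · simpa [h] using hgm
    · simpa [h] using hfm
  have hcr : ∀ (A : Finset (Fin ℓ × Fin ℓ)) (e' : Fin ℓ × Fin ℓ) (x y : ℝ),
      (if e' ∈ A then g else f) x y ∈ Set.Icc (0:ℝ) 1 := by
    intro A e' x y
    by_cases h : e' ∈ A
    · simpa [h] using hgr x y
    · simpa [h] using hfr x y
  have step : ∀ (A : Finset (Fin ℓ × Fin ℓ)) (e : Fin ℓ × Fin ℓ), e ∈ E → e ∉ A →
      |CL_D E f g A - CL_D E f g (insert e A)| ≤ ε := by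
    intro A e heE heA
    unfold CL_D
    refine CL_onestep E hloop hsimple e heE
      (fun e' => if e' ∈ A then g else f) (fun e' => if e' ∈ insert e A then g else f)
      (fun e' => by simpa using hcm A e') (fun e' => hcr A e')
      (fun e' => by simpa using hcm (insert e A) e') (fun e' => hcr (insert e A) e')
      ?_ ε ?_
    · intro e' he'
      have hne : e' ≠ e := (Finset.mem_erase.1 he').1
      simp [Finset.mem_insert, hne]
    · intro S T hS hT
      have h1 : (if e ∈ A then g else f) = f := if_neg heA
      have h2 : (if e ∈ insert e A then g else f) = g := if_pos (Finset.mem_insert_self e A)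
      simp only [h1, h2]
      exact le_trans (CL_le_cutDist f g hfm hgm hfr hgr hS hT) hd
  have main : ∀ A : Finset (Fin ℓ × Fin ℓ), A ⊆ E →
      |CL_D E f g ∅ - CL_D E f g A| ≤ A.card * ε := by
    intro A
    induction A using Finset.induction_on with
    | empty => intro _; simp
    | @insert e A heA ih =>
      intro hAE
      have hAE' : A ⊆ E := (Finset.subset_insert e A).trans hAE
      have heE : e ∈ E := hAE (Finset.mem_insert_self e A)
      have hstep := step A e heE heA
      have hih := ih hAE'
      calc |CL_D E f g ∅ - CL_D E f g (insert e A)|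
          ≤ |CL_D E f g ∅ - CL_D E f g A| + |CL_D E f g A - CL_D E f g (insert e A)| :=
            abs_sub_le _ _ _
        _ ≤ A.card * ε + ε := add_le_add hih hstep
        _ = (insert e A).card * ε := by
            rw [Finset.card_insert_of_notMem heA]
            push_cast
            ring
  have hDf : homDensity ℓ E f = CL_D E f g ∅ := by
    unfold homDensity CL_D CLmu
    simp
  have hDg : homDensity ℓ E g = CL_D E f g E := by
    unfold homDensity CL_D CLmu
    refine integral_congr_ae (Filter.Eventually.of_forall fun x => ?_)
    exact Finset.prod_congr rfl fun e' he' => by simp [he']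
  rw [hDf, hDg]
  exact main E le_rfl

/-- counting lemma: for a simple graph `H` on `ℓ` vertices with edge set `E`
and graphons `f`, `g` with `d_□(f,g) ≤ ε`, we have `|t(H,f) - t(H,g)| ≤ |E(H)| ε`. -/
theorem counting_lemma (ℓ : ℕ) (E : Finset (Fin ℓ × Fin ℓ))
    (hloop : ∀ e ∈ E, e.1 ≠ e.2) (hsimple : ∀ e ∈ E, (e.2, e.1) ∉ E)
    (f g : ℝ → ℝ → ℝ)
    (hfm : Measurable (Function.uncurry f)) (hgm : Measurable (Function.uncurry g))
    (hfr : ∀ x y, f x y ∈ Set.Icc (0 : ℝ) 1) (hgr : ∀ x y, g x y ∈ Set.Icc (0 : ℝ) 1)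
    (hfs : ∀ x y, f x y = f y x) (hgs : ∀ x y, g x y = g y x)
    (ε : ℝ) (hd : cutDist f g ≤ ε) :
    |homDensity ℓ E f - homDensity ℓ E g| ≤ E.card * ε :=
  counting_lemma' ℓ E hloop hsimple f g hfm hgm hfr hgr ε hd
end
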